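/- Let X_1, X_2, …, X_n be {0,1}-valued random variables on a probability space that are negatively correlated, and let μ = E[∑_{i=1}^n X_i]. Then for every δ ∈ (0,1), Pr[∑_{i=1}^n X_i ≤ (1-δ)μ] ≤ exp(-δ²μ/2). -/

import Mathlib

open MeasureTheory
open scoped ENNReal

lemma chernoff_hasDeriv (x : ℝ) (hx : x < 1) :
    HasDerivAt (fun y => (1 - y) * Real.log (1 - y) + (y - y ^ 2 / 2))
      (-Real.log (1 - x) - x) x := by
  have h1x : (0:ℝ) < 1 - x := by linarith
  have hlog : HasDerivAt (fun y : ℝ => Real.log (1 - y)) ((1 - x)⁻¹ * (-1)) x := by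
    have h := (Real.hasDerivAt_log h1x.ne').comp x ((hasDerivAt_id x).const_sub 1)
    exact h.congr_deriv (by simp)
  have hprod : HasDerivAt (fun y : ℝ => (1 - y) * Real.log (1 - y))
      ((-1) * Real.log (1 - x) + (1 - x) * ((1 - x)⁻¹ * (-1))) x :=
    ((hasDerivAt_id x).const_sub 1).mul hlog
  have hpoly : HasDerivAt (fun y : ℝ => y - y ^ 2 / 2) (1 - x) x := by
    have := ((hasDerivAt_pow 2 x).div_const 2)
    have h2 := (hasDerivAt_id x).sub this
    exact h2.congr_deriv (by norm_num)
  have := hprod.add hpoly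
  refine this.congr_deriv ?_
  rw [mul_inv_cancel_left₀ h1x.ne']
  ring

lemma chernoff_key {δ : ℝ} (h0 : 0 < δ) (h1 : δ < 1) :
    -δ + δ ^ 2 / 2 ≤ (1 - δ) * Real.log (1 - δ) := by
  set f : ℝ → ℝ := fun y => (1 - y) * Real.log (1 - y) + (y - y ^ 2 / 2) with hf
  have hmono : MonotoneOn f (Set.Icc 0 δ) := by
    apply monotoneOn_of_deriv_nonneg (convex_Icc 0 δ)
    · intro x hx
      exact (chernoff_hasDeriv x (lt_of_le_of_lt hx.2 h1)).continuousAt.continuousWithinAt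
    · intro x hx
      rw [interior_Icc] at hx
      exact (chernoff_hasDeriv x (hx.2.trans h1)).differentiableAt.differentiableWithinAt
    · intro x hx
      rw [interior_Icc] at hx
      have hx1 : x < 1 := hx.2.trans h1
      rw [(chernoff_hasDeriv x hx1).deriv]
      have : Real.log (1 - x) ≤ (1 - x) - 1 := Real.log_le_sub_one_of_pos (by linarith)
      linarith
  have := hmono ⟨le_refl _, h0.le⟩ ⟨h0.le, le_refl _⟩ h0.le
  simp only [hf] at this
  simp at this
  linarith

/-- lower-tail Chernoff bound for negatively correlated 0/1 variables. -/
theorem stmt_9 {Ω : Type*} [MeasurableSpace Ω] (P : Measure Ω)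
    [IsProbabilityMeasure P] (n : ℕ) (X : Fin n → Ω → ℝ)
    (hmeas : ∀ i, Measurable (X i))
    (h01 : ∀ i ω, X i ω = 0 ∨ X i ω = 1)
    (hneg : ∀ (S : Finset (Fin n)) (b : ℝ), b = 0 ∨ b = 1 →
      P {ω | ∀ i ∈ S, X i ω = b} ≤ ∏ i ∈ S, P {ω | X i ω = b})
    (μ : ℝ) (hμ : μ = ∫ ω, (∑ i, X i ω) ∂P)
    (δ : ℝ) (hδ : δ ∈ Set.Ioo (0 : ℝ) 1) :
    (P {ω | ∑ i, X i ω ≤ (1 - δ) * μ}).toReal ≤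
      Real.exp (-(δ ^ 2 * μ) / 2) := by
  classical
  obtain ⟨hδ0, hδ1⟩ := hδ
  have h1δ : (0:ℝ) < 1 - δ := by linarith
  have hset1 : ∀ i, MeasurableSet {ω | X i ω = 1} :=
    fun i => (hmeas i) (measurableSet_singleton 1)
  have hset0 : ∀ i, MeasurableSet {ω | X i ω = 0} :=
    fun i => (hmeas i) (measurableSet_singleton 0)
  set p : Fin n → ℝ := fun i => (P {ω | X i ω = 1}).toReal with hpdef
  set r : Fin n → ℝ := fun i => (P {ω | X i ω = 0}).toReal with hrdef
  have hp0 : ∀ i, 0 ≤ p i := fun i => ENNReal.toReal_nonneg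
  have hp1 : ∀ i, p i ≤ 1 := by
    intro i
    have : P {ω | X i ω = 1} ≤ 1 := prob_le_one
    calc p i ≤ (1:ℝ≥0∞).toReal := ENNReal.toReal_mono ENNReal.one_ne_top this
    _ = 1 := by simp
  -- X i as indicator
  have hXind : ∀ i, X i = Set.indicator {ω | X i ω = 1} (fun _ => (1:ℝ)) := by
    intro i; funext ω
    rcases h01 i ω with h | h
    · rw [h, Set.indicator_of_notMem]
      simp [Set.mem_setOf_eq, h]
    · rw [h, Set.indicator_of_mem]
      exact h
  have hint : ∀ i, Integrable (X i) P := by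
    intro i; rw [hXind i]
    exact (integrable_const 1).indicator (hset1 i)
  have hintX : ∀ i, ∫ ω, X i ω ∂P = p i := by
    intro i
    conv_lhs => rw [hXind i]
    rw [integral_indicator_const (1:ℝ) (hset1 i)]
    simp [hpdef, Measure.real]
  have hμsum : μ = ∑ i, p i := by
    rw [hμ, integral_finset_sum Finset.univ (fun i _ => hint i)]
    exact Finset.sum_congr rfl fun i _ => hintX i
  have hμ0 : 0 ≤ μ := by
    rw [hμsum]; exact Finset.sum_nonneg fun i _ => hp0 i
  -- r i = 1 - p i
  have hr1 : ∀ i, r i = 1 - p i := by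
    intro i
    have hcompl : {ω | X i ω = 0} = {ω | X i ω = 1}ᶜ := by
      ext ω
      rcases h01 i ω with h | h <;> simp [h]
    rw [hrdef]
    simp only [hcompl]
    rw [measure_compl (hset1 i) (measure_ne_top P _), measure_univ,
      ENNReal.toReal_sub_of_le prob_le_one ENNReal.one_ne_top]
    simp [hpdef]
  -- the function G
  set G : Ω → ℝ := fun ω => ∏ i, (1 - δ * X i ω) with hGdef
  have hfac : ∀ i ω, 1 - δ * X i ω = Real.exp (Real.log (1 - δ) * X i ω) := by
    intro i ω
    rcases h01 i ω with h | h
    · simp [h]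
    · rw [h]; simp [Real.exp_log h1δ]
  have hGexp : ∀ ω, G ω = Real.exp (Real.log (1 - δ) * ∑ i, X i ω) := by
    intro ω
    rw [hGdef]
    simp only [hfac]
    rw [← Real.exp_sum, Finset.mul_sum]
  have hGnonneg : ∀ ω, 0 ≤ G ω := fun ω => by rw [hGexp]; positivity
  have hGle1 : ∀ ω, G ω ≤ 1 := by
    intro ω
    apply Finset.prod_le_one
    · intro i _
      rcases h01 i ω with h | h <;> simp [h] <;> linarith
    · intro i _
      rcases h01 i ω with h | h <;> simp [h] <;> linarith
  have hGmeas : Measurable G :=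
    Finset.measurable_prod _ fun i _ => measurable_const.sub ((hmeas i).const_mul δ)
  have hGint : Integrable G P := by
    apply Integrable.mono' (integrable_const (1:ℝ)) hGmeas.aestronglyMeasurable
    filter_upwards with ω
    rw [Real.norm_eq_abs, abs_of_nonneg (hGnonneg ω)]
    exact hGle1 ω
  -- indicator functions for subsets
  set E : Finset (Fin n) → Set Ω := fun t => {ω | ∀ i ∈ t, X i ω = 0} with hEdef
  have hEmeas : ∀ t, MeasurableSet (E t) := by
    intro t
    have : E t = ⋂ i ∈ t, {ω | X i ω = 0} := by
      ext ω; simp [hEdef, Set.mem_iInter]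
    rw [this]
    exact MeasurableSet.biInter (Set.to_countable _) fun i _ => hset0 i
  set h : Finset (Fin n) → Ω → ℝ := fun t ω => ∏ i ∈ t, (1 - X i ω) with hhdef
  have hhind : ∀ t, h t = Set.indicator (E t) (fun _ => (1:ℝ)) := by
    intro t; funext ω
    by_cases hm : ω ∈ E t
    · rw [Set.indicator_of_mem hm]
      apply Finset.prod_eq_one
      intro i hi
      rw [hm i hi]; ring
    · rw [Set.indicator_of_notMem hm]
      simp only [hEdef, Set.mem_setOf_eq, not_forall] at hm
      obtain ⟨i, hi, hXi⟩ := hm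
      have hX1 : X i ω = 1 := (h01 i ω).resolve_left hXi
      exact Finset.prod_eq_zero hi (by rw [hX1]; ring)
  have hhint : ∀ t, Integrable (h t) P := by
    intro t; rw [hhind t]
    exact (integrable_const 1).indicator (hEmeas t)
  have hhval : ∀ t, ∫ ω, h t ω ∂P = (P (E t)).toReal := by
    intro t
    conv_lhs => rw [hhind t]
    rw [integral_indicator_const (1:ℝ) (hEmeas t)]
    simp [Measure.real]
  -- expansion of G
  have hGsum : ∀ ω, G ω = ∑ t ∈ Finset.univ.powerset,
      (δ ^ t.card * (1 - δ) ^ (Finset.univ \ t).card) * h t ω := by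
    intro ω
    have h1 : G ω = ∏ i, (δ * (1 - X i ω) + (1 - δ)) := by
      apply Finset.prod_congr rfl
      intro i _; ring
    rw [h1, Finset.prod_add]
    apply Finset.sum_congr rfl
    intro t _
    rw [Finset.prod_const, Finset.prod_mul_distrib, Finset.prod_const]
    simp only [hhdef]
    ring
  -- each coefficient
  set c : Finset (Fin n) → ℝ := fun t => δ ^ t.card * (1 - δ) ^ (Finset.univ \ t).card
    with hcdef
  have hc0 : ∀ t, 0 ≤ c t := fun t => by positivity
  -- integral of G
  have hGint_eq : ∫ ω, G ω ∂P = ∑ t ∈ Finset.univ.powerset, c t * (P (E t)).toReal := by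
    have : ∫ ω, G ω ∂P
        = ∫ ω, (∑ t ∈ Finset.univ.powerset, c t * h t ω) ∂P := by
      apply integral_congr_ae
      filter_upwards with ω
      rw [hGsum ω]
    rw [this, integral_finset_sum _ (fun t _ => (hhint t).const_mul (c t))]
    apply Finset.sum_congr rfl
    intro t _
    rw [integral_const_mul, hhval t]
  -- negative correlation bound
  have hEP : ∀ t : Finset (Fin n), (P (E t)).toReal ≤ ∏ i ∈ t, r i := by
    intro t
    have h1 := hneg t 0 (Or.inl rfl)
    have h2 : (∏ i ∈ t, P {ω | X i ω = 0}) ≠ ⊤ := by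
      apply ne_of_lt
      calc (∏ i ∈ t, P {ω | X i ω = 0}) ≤ ∏ i ∈ t, 1 :=
        Finset.prod_le_prod' fun i _ => prob_le_one
      _ = 1 := Finset.prod_const_one
      _ < ⊤ := ENNReal.one_lt_top
    calc (P (E t)).toReal ≤ (∏ i ∈ t, P {ω | X i ω = 0}).toReal :=
      ENNReal.toReal_mono h2 h1
    _ = ∏ i ∈ t, r i := ENNReal.toReal_prod _ _
  -- bound the integral
  have hGbound : ∫ ω, G ω ∂P ≤ Real.exp (-(δ * μ)) := by
    rw [hGint_eq]
    calc ∑ t ∈ Finset.univ.powerset, c t * (P (E t)).toReal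
        ≤ ∑ t ∈ Finset.univ.powerset, c t * ∏ i ∈ t, r i := by
          apply Finset.sum_le_sum
          intro t _
          exact mul_le_mul_of_nonneg_left (hEP t) (hc0 t)
      _ = ∑ t ∈ Finset.univ.powerset,
            (∏ i ∈ t, (δ * r i)) * ∏ i ∈ Finset.univ \ t, (1 - δ) := by
          apply Finset.sum_congr rfl
          intro t _
          rw [Finset.prod_mul_distrib, Finset.prod_const, Finset.prod_const, hcdef]
          ring
      _ = ∏ i, (δ * r i + (1 - δ)) := (Finset.prod_add _ _ _).symm
      _ ≤ ∏ i, Real.exp (-(δ * p i)) := by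
          apply Finset.prod_le_prod
          · intro i _
            rw [hr1 i]
            have := hp1 i
            nlinarith
          · intro i _
            rw [hr1 i]
            have := Real.add_one_le_exp (-(δ * p i))
            linarith
      _ = Real.exp (-(δ * μ)) := by
          rw [← Real.exp_sum, hμsum, Finset.mul_sum]
          congr 1
          rw [← Finset.sum_neg_distrib]
  -- Markov
  set ε : ℝ := Real.exp (Real.log (1 - δ) * ((1 - δ) * μ)) with hεdef
  have hεpos : 0 < ε := Real.exp_pos _
  have hsub : {ω | ∑ i, X i ω ≤ (1 - δ) * μ} ⊆ {ω | ε ≤ G ω} := by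
    intro ω hω
    simp only [Set.mem_setOf_eq] at hω ⊢
    rw [hGexp ω, hεdef]
    apply Real.exp_le_exp.mpr
    have hlogneg : Real.log (1 - δ) ≤ 0 := Real.log_nonpos (by linarith) (by linarith)
    exact mul_le_mul_of_nonpos_left hω hlogneg
  have hmarkov := mul_meas_ge_le_integral_of_nonneg
    (ae_of_all P hGnonneg) hGint ε
  have hPA : (P {ω | ∑ i, X i ω ≤ (1 - δ) * μ}).toReal ≤ (P {ω | ε ≤ G ω}).toReal :=
    ENNReal.toReal_mono (measure_ne_top P _) (measure_mono hsub)
  have hfinal : (P {ω | ∑ i, X i ω ≤ (1 - δ) * μ}).toReal ≤ Real.exp (-(δ * μ)) / ε := by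
    rw [le_div_iff₀ hεpos]
    calc (P {ω | ∑ i, X i ω ≤ (1 - δ) * μ}).toReal * ε
        = ε * (P {ω | ε ≤ G ω}).toReal
          + ε * ((P {ω | ∑ i, X i ω ≤ (1 - δ) * μ}).toReal - (P {ω | ε ≤ G ω}).toReal) := by
          ring
      _ ≤ ∫ ω, G ω ∂P + 0 := by
          apply add_le_add hmarkov
          apply mul_nonpos_of_nonneg_of_nonpos hεpos.le
          linarith
      _ = ∫ ω, G ω ∂P := add_zero _
      _ ≤ Real.exp (-(δ * μ)) := hGbound
  calc (P {ω | ∑ i, X i ω ≤ (1 - δ) * μ}).toReal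
      ≤ Real.exp (-(δ * μ)) / ε := hfinal
    _ = Real.exp (-(δ * μ) - Real.log (1 - δ) * ((1 - δ) * μ)) := by
        rw [hεdef, ← Real.exp_sub]
    _ ≤ Real.exp (-(δ ^ 2 * μ) / 2) := by
        apply Real.exp_le_exp.mpr
        have hkey := chernoff_key hδ0 hδ1
        nlinarith [mul_le_mul_of_nonneg_left hkey hμ0]
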